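/- (Symmetric fidelity of the optimal cloner of two Fourier-transformed bases in dimension d.) For every integer d ≥ 2, the real number F = (1 + 1/√d)/2 is the unique solution in the interval [1/2, 1] of the equation F = F/d + (d − 1)(1 − F)/d + (2/d)·√((d − 1)·F·(1 − F)). -/

import Mathlib

/-- Symmetric fidelity of the optimal cloner of two Fourier-transformed bases in
dimension `d`: `F = (1 + 1/√d)/2` is the unique solution in `[1/2, 1]` of
`F = F/d + (d−1)(1−F)/d + (2/d)·√((d−1)·F·(1−F))`. -/
theorem fourier_bases_symmetric_fidelity (d : ℕ) (hd : 2 ≤ d) :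
    ((1 : ℝ) / 2 ≤ (1 + 1 / Real.sqrt d) / 2 ∧ (1 + 1 / Real.sqrt d) / 2 ≤ 1 ∧
      (1 + 1 / Real.sqrt d) / 2 =
        ((1 + 1 / Real.sqrt d) / 2) / d +
          (d - 1) * (1 - (1 + 1 / Real.sqrt d) / 2) / d +
          (2 / d) * Real.sqrt
            ((d - 1) * ((1 + 1 / Real.sqrt d) / 2) * (1 - (1 + 1 / Real.sqrt d) / 2))) ∧
    ∀ F : ℝ, 1 / 2 ≤ F → F ≤ 1 →
      F = F / d + (d - 1) * (1 - F) / d + (2 / d) * Real.sqrt ((d - 1) * F * (1 - F)) →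
      F = (1 + 1 / Real.sqrt d) / 2 := by
  have hd2 : (2 : ℝ) ≤ (d : ℝ) := by exact_mod_cast hd
  have hdpos : (0 : ℝ) < (d : ℝ) := by linarith
  have hdne : (d : ℝ) ≠ 0 := ne_of_gt hdpos
  set s := Real.sqrt d with hs
  have hspos : 0 < s := Real.sqrt_pos.mpr hdpos
  have hsne : s ≠ 0 := ne_of_gt hspos
  have hs2 : s ^ 2 = (d : ℝ) := Real.sq_sqrt hdpos.le
  have hs1 : 1 ≤ s := by
    nlinarith [hs2, hspos]
  have hinv : 1 / s ≤ 1 := by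
    rw [div_le_one hspos]; exact hs1
  have hinvpos : 0 < 1 / s := by positivity
  constructor
  · refine ⟨by linarith, by linarith, ?_⟩
    have harg : ((d : ℝ) - 1) * ((1 + 1 / s) / 2) * (1 - (1 + 1 / s) / 2)
        = (((d : ℝ) - 1) / (2 * s)) ^ 2 := by
      field_simp
      rw [← hs2]; ring
    rw [harg, Real.sqrt_sq (div_nonneg (by linarith) (by positivity))]
    field_simp
    rw [← hs2]; ring
  · intro F hF1 hF2 hEq
    have hnn : 0 ≤ ((d : ℝ) - 1) * F * (1 - F) :=
      mul_nonneg (mul_nonneg (by linarith) (by linarith)) (by linarith)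
    have hE2 : Real.sqrt (((d : ℝ) - 1) * F * (1 - F)) ^ 2 = ((d : ℝ) - 1) * F * (1 - F) :=
      Real.sq_sqrt hnn
    set E := Real.sqrt (((d : ℝ) - 1) * F * (1 - F)) with hEdef
    have h' : F * (d : ℝ) = F + ((d : ℝ) - 1) * (1 - F) + 2 * E := by
      nth_rewrite 1 [hEq]
      field_simp
    have key : ((d : ℝ) - 1) * (2 * F - 1) = 2 * E := by linear_combination h'
    have hd1 : (0 : ℝ) < (d : ℝ) - 1 := by linarith
    have h1 : (((d : ℝ) - 1) * (2 * F - 1)) ^ 2 = 4 * (((d : ℝ) - 1) * F * (1 - F)) := by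
      rw [key]; linear_combination 4 * hE2
    have h2 : ((d : ℝ) - 1) * (2 * F - 1) ^ 2 = 4 * F * (1 - F) := by
      apply mul_left_cancel₀ (ne_of_gt hd1)
      linear_combination h1
    have hsq : (d : ℝ) * (2 * F - 1) ^ 2 = 1 := by linear_combination h2
    have hsqs : (2 * F - 1) ^ 2 = (1 / s) ^ 2 := by
      field_simp [hs2]
      linear_combination hsq + (2 * F - 1) ^ 2 * hs2
    have hnn' : 0 ≤ 2 * F - 1 := by linarith
    have ht : 2 * F - 1 = 1 / s := by
      have hz : (2 * F - 1 - 1 / s) * (2 * F - 1 + 1 / s) = 0 := by linear_combination hsqs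
      rcases mul_eq_zero.mp hz with h0 | h0
      · linarith
      · linarith
    linarith
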